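/- Let G = ℤ/2ℤ with its additive group structure. There exist a finite set Z, subsets X, Y ⊆ Z with X ∪ Y = Z, and a transition function γ : (Z → G) → (Z → G) such that γ is reducible to the cover {X, Y} but γ ∘ γ is not reducible to {X, Y}. -/

import Mathlib

open scoped Classical

/-- The restriction of `g : Z → G` to a subset `W ⊆ Z`. -/
def restrict {U G : Type*} {Z : Set U} (W : Set U) (hW : W ⊆ Z) (g : Z → G) : W → G :=
  fun w => g ⟨w, hW w.2⟩

/-- The coupling `α * β` of two transition functions, defined on a set `Z`
satisfying `X ⊆ Z`, `Y ⊆ Z`, `Z ⊆ X ∪ Y`. -/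
noncomputable def couple {U G : Type*} (op : G → G → G) {X Y Z : Set U}
    (hX : X ⊆ Z) (hY : Y ⊆ Z) (hZ : ∀ z ∈ Z, z ∈ X ∨ z ∈ Y)
    (α : (X → G) → (X → G)) (β : (Y → G) → (Y → G)) : (Z → G) → (Z → G) :=
  fun g z =>
    if hx : (z : U) ∈ X then
      if hy : (z : U) ∈ Y then
        op (α (restrict X hX g) ⟨z, hx⟩) (β (restrict Y hY g) ⟨z, hy⟩)
      else α (restrict X hX g) ⟨z, hx⟩
    else β (restrict Y hY g) ⟨z, (hZ z z.2).resolve_left hx⟩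


/-- Reducibility of a transition function on `X ∪ Y` to the cover `{X, Y}`. -/
def IsReducible {U G : Type*} (op : G → G → G) (X Y : Set U)
    (γ : (↥(X ∪ Y) → G) → (↥(X ∪ Y) → G)) : Prop :=
  ∃ (α : (X → G) → (X → G)) (β : (Y → G) → (Y → G)),
    γ = couple op (Z := X ∪ Y) Set.subset_union_left Set.subset_union_right
      (fun _ hz => hz) α β

/- Auxiliary example data -/
def Xex : Set ℕ := {0, 1}
def Yex : Set ℕ := {1, 2}

noncomputable def αex : (Xex → ZMod 2) → (Xex → ZMod 2) :=
  fun f x => if (x : ℕ) = 0 then f ⟨1, by simp [Xex]⟩ else f ⟨0, by simp [Xex]⟩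

noncomputable def βex : (Yex → ZMod 2) → (Yex → ZMod 2) :=
  fun f y => if (y : ℕ) = 2 then f ⟨1, by simp [Yex]⟩ else f ⟨2, by simp [Yex]⟩

noncomputable def γex : (↥(Xex ∪ Yex) → ZMod 2) → (↥(Xex ∪ Yex) → ZMod 2) :=
  couple (· + ·) (Z := Xex ∪ Yex) Set.subset_union_left Set.subset_union_right
    (fun _ hz => hz) αex βex

/-- over `G = ℤ/2ℤ` there is a finite set `Z` covered by `{X, Y}`
and a transition function `γ` on `Z` which is reducible to `{X, Y}`, while
`γ ∘ γ` is not. -/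
theorem exists_reducible_sq_not_reducible :
    ∃ (X Y : Set ℕ), (X ∪ Y).Finite ∧
      ∃ γ : (↥(X ∪ Y) → ZMod 2) → (↥(X ∪ Y) → ZMod 2),
        IsReducible (· + ·) X Y γ ∧ ¬ IsReducible (· + ·) X Y (γ ∘ γ) := by
  refine ⟨Xex, Yex, ?_, γex, ⟨αex, βex, rfl⟩, ?_⟩
  · exact (((Set.finite_singleton 1).insert 0).union ((Set.finite_singleton 2).insert 1))
  rintro ⟨α', β', h⟩
  -- points of X ∪ Y
  have h0 : (0 : ℕ) ∈ Xex ∪ Yex := by simp [Xex, Yex]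
  have h1 : (1 : ℕ) ∈ Xex ∪ Yex := by simp [Xex, Yex]
  have h2 : (2 : ℕ) ∈ Xex ∪ Yex := by simp [Xex, Yex]
  set z0 : ↥(Xex ∪ Yex) := ⟨0, h0⟩
  -- two functions agreeing on X
  set g₁ : ↥(Xex ∪ Yex) → ZMod 2 := fun _ => 0 with hg₁
  set g₂ : ↥(Xex ∪ Yex) → ZMod 2 := fun z => if (z : ℕ) = 2 then 1 else 0 with hg₂
  have hres : restrict Xex Set.subset_union_left g₁ = restrict Xex Set.subset_union_left g₂ := by
    funext x
    have hx := x.2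
    simp only [Xex, Set.mem_insert_iff, Set.mem_singleton_iff] at hx
    simp [restrict, hg₁, hg₂]
    rcases hx with hx | hx <;> simp [hx]
  have h0X : (0 : ℕ) ∈ Xex := by simp [Xex]
  have h0Y : (0 : ℕ) ∉ Yex := by simp [Yex]
  -- value of (γex ∘ γex) g z0
  have key : ∀ g : ↥(Xex ∪ Yex) → ZMod 2,
      (γex ∘ γex) g z0 = g ⟨0, h0⟩ + g ⟨2, h2⟩ := by
    intro g
    have e1 : γex g ⟨1, h1⟩ = g ⟨0, h0⟩ + g ⟨2, h2⟩ := by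
      simp [γex, couple, αex, βex, restrict, Xex, Yex]
    simp only [Function.comp_apply]
    have : γex (γex g) z0 = γex g ⟨1, h1⟩ := by
      simp [γex, couple, αex, restrict, z0, Xex, Yex]
    rw [this, e1]
  have k1 := key g₁
  have k2 := key g₂
  have c1 := congrFun (congrFun h g₁) z0
  have c2 := congrFun (congrFun h g₂) z0
  have hz0 : (z0 : ℕ) = 0 := rfl
  simp only [couple, hz0, h0X, h0Y, dif_pos, dif_neg, not_false_iff] at c1 c2
  rw [k1] at c1
  rw [k2] at c2
  rw [hres] at c1
  have := c2.trans c1.symm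
  simp [hg₁, hg₂] at this
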